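/- Let D be a commutative ℂ-algebra satisfying the CD identity, V a ℂ-vector space, and θ : D × D → V a symmetric bilinear map. Then the central extension D_θ satisfies the CD identity if and only if θ satisfies the CD-cocycle condition, i.e., θ((xy)a, b) + θ((xb)a, y) + θ(x, (yb)a) = θ((xy)b, a) + θ((xa)b, y) + θ(x, (ya)b) for all x, y, a, b ∈ D. -/
import Mathlib


/-- The multiplication of the central extension `A_θ`:
`(x,u)(y,v) = (xy, θ x y)`. -/
def extMul {D V : Type*} [NonUnitalNonAssocRing D] [Module ℂ D]
    [AddCommGroup V] [Module ℂ V]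
    (θ : D →ₗ[ℂ] D →ₗ[ℂ] V) (p q : D × V) : D × V :=
  (p.1 * q.1, θ p.1 q.1)

/-- For a commutative `ℂ`-algebra `D` satisfying the CD identity and a symmetric bilinear
map `θ`, the central extension `D_θ` satisfies the CD identity iff `θ` satisfies the
CD-cocycle condition. -/
theorem stmt7 (D : Type*) [NonUnitalNonAssocCommRing D] [Module ℂ D]
    [SMulCommClass ℂ D D] [IsScalarTower ℂ D D]
    (V : Type*) [AddCommGroup V] [Module ℂ V]
    (hCD : ∀ x y a b : D,
      ((x * y) * a) * b + ((x * b) * a) * y + x * ((y * b) * a)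
        = ((x * y) * b) * a + ((x * a) * b) * y + x * ((y * a) * b))
    (θ : D →ₗ[ℂ] D →ₗ[ℂ] V) (hθsymm : ∀ x y, θ x y = θ y x) :
    (∀ x y a b : D × V,
      extMul θ (extMul θ (extMul θ x y) a) b
        + extMul θ (extMul θ (extMul θ x b) a) y
        + extMul θ x (extMul θ (extMul θ y b) a)
      = extMul θ (extMul θ (extMul θ x y) b) a
        + extMul θ (extMul θ (extMul θ x a) b) y
        + extMul θ x (extMul θ (extMul θ y a) b)) ↔
    (∀ x y a b : D,
      θ ((x * y) * a) b + θ ((x * b) * a) y + θ x ((y * b) * a)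
        = θ ((x * y) * b) a + θ ((x * a) * b) y + θ x ((y * a) * b)) := by
  constructor
  · intro h x y a b
    have := congrArg Prod.snd (h (x, 0) (y, 0) (a, 0) (b, 0))
    simpa [extMul, Prod.ext_iff] using this
  · intro h x y a b
    simp only [extMul, Prod.ext_iff, Prod.fst_add, Prod.snd_add]
    exact ⟨hCD _ _ _ _, h _ _ _ _⟩
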